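/- Let 𝔱 be a finite-dimensional real vector space, let B be a basis of 𝔱, let L be the additive subgroup of 𝔱 generated by B, and let T := 𝔱/L with the quotient topology. Let 𝔫 ⊆ 𝔱 be a linear subspace, let N be the image of 𝔫 under the projection 𝔱 → T, let 𝔡 be a linear complement of 𝔫 in 𝔱, and let π_𝔡 : 𝔱 → 𝔡 be the linear projection with kernel 𝔫. If N is closed in T (equivalently, compact), then Q := π_𝔡(L) is a discrete subgroup of 𝔡 which spans 𝔡 over ℝ; that is, Q is a lattice in 𝔡. (This is the paper's parenthetical claim that the kernel Q of p_𝔡 : 𝔡 → T/N is a lattice when N is compact.) -/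

import Mathlib

lemma aux_uncountable_cantor : Uncountable (ℕ → Bool) := by
  rw [← not_countable_iff]
  intro h
  obtain ⟨g, hg⟩ := Countable.exists_injective_nat (ℕ → Bool)
  classical
  have hinj : Function.Injective (fun s : Set ℕ => g (fun n => decide (n ∈ s))) := by
    intro s t hst
    have h2 := hg hst
    ext n
    simpa using congrFun h2 n
  exact Function.cantor_injective _ hinj

/-- If the connected subgroup `N ⊆ T = 𝔱/L` determined by the subspace `𝔫` is
closed in the torus `T`, then the kernel `Q = π𝔡(L)` of `p : 𝔡 → T/N` is a
lattice in the complement `𝔡`: it is a discrete subgroup of `𝔡` spanning `𝔡`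
over `ℝ`. -/
theorem kernel_is_lattice_of_closed {n : ℕ}
    {ι : Type*} [Fintype ι] (b : Module.Basis ι ℝ (Fin n → ℝ))
    (L : AddSubgroup (Fin n → ℝ)) (hL : L = AddSubgroup.closure (Set.range b))
    (𝔫 𝔡 : Submodule ℝ (Fin n → ℝ)) (hcompl : IsCompl 𝔡 𝔫)
    (N : AddSubgroup ((Fin n → ℝ) ⧸ L))
    (hN : N = AddSubgroup.map (QuotientAddGroup.mk' L) 𝔫.toAddSubgroup)
    (hNclosed : IsClosed (N : Set ((Fin n → ℝ) ⧸ L)))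
    (Q : AddSubgroup ↥𝔡)
    (hQ : Q = AddSubgroup.map (𝔡.linearProjOfIsCompl 𝔫 hcompl).toAddMonoidHom L) :
    DiscreteTopology ↥Q ∧ Submodule.span ℝ (Q : Set ↥𝔡) = ⊤ := by
  classical
  set π := 𝔡.linearProjOfIsCompl 𝔫 hcompl with hπ
  -- membership characterization
  have hmemQ : ∀ x : ↥𝔡, x ∈ Q ↔ QuotientAddGroup.mk' L (x : Fin n → ℝ) ∈ N := by
    intro x
    constructor
    · intro hx
      rw [hQ, AddSubgroup.mem_map] at hx
      obtain ⟨l, hlL, hlx⟩ := hx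
      rw [hN, AddSubgroup.mem_map]
      refine ⟨(x : Fin n → ℝ) - l, ?_, ?_⟩
      · rw [Submodule.mem_toAddSubgroup, ← Submodule.linearProjOfIsCompl_ker hcompl (p := 𝔡),
          LinearMap.mem_ker, map_sub]
        have h1 : π (x : Fin n → ℝ) = x := Submodule.linearProjOfIsCompl_apply_left hcompl x
        have h2 : π l = x := hlx
        exact (by rw [h1, h2, sub_self] : π (x : Fin n → ℝ) - π l = 0)
      · rw [QuotientAddGroup.mk'_apply, QuotientAddGroup.mk'_apply,
          QuotientAddGroup.eq_iff_sub_mem]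
        simpa using L.neg_mem hlL
    · intro hx
      rw [hN, AddSubgroup.mem_map] at hx
      obtain ⟨m, hm, hmx⟩ := hx
      rw [Submodule.mem_toAddSubgroup] at hm
      rw [QuotientAddGroup.mk'_apply, QuotientAddGroup.mk'_apply,
        QuotientAddGroup.eq_iff_sub_mem] at hmx
      rw [hQ, AddSubgroup.mem_map]
      refine ⟨(x : Fin n → ℝ) - m, by simpa using L.neg_mem hmx, ?_⟩
      show π ((x : Fin n → ℝ) - m) = x
      have h1 : π (x : Fin n → ℝ) = x := Submodule.linearProjOfIsCompl_apply_left hcompl x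
      have h2 : π m = 0 := Submodule.linearProjOfIsCompl_apply_right' hcompl hm
      rw [map_sub, h1, h2, sub_zero]
  -- closedness
  have hQclosed : IsClosed (Q : Set ↥𝔡) := by
    have heq : (Q : Set ↥𝔡) =
        (Subtype.val : ↥𝔡 → Fin n → ℝ) ⁻¹' (QuotientAddGroup.mk' L ⁻¹' (N : Set _)) := by
      ext x; exact hmemQ x
    rw [heq]
    exact ((hNclosed.preimage continuous_quotient_mk').preimage continuous_subtype_val)
  -- countability
  have hLc : (L : Set (Fin n → ℝ)).Countable := by
    have hsub : (L : Set (Fin n → ℝ)) ⊆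
        Set.range (fun c : ι → ℤ => ∑ i, c i • b i) := by
      intro x hx
      rw [SetLike.mem_coe, hL, ← Submodule.span_int_eq_addSubgroupClosure,
        Submodule.mem_toAddSubgroup, Submodule.mem_span_range_iff_exists_fun _] at hx
      obtain ⟨c, hc⟩ := hx
      exact ⟨c, hc⟩
    exact Set.Countable.mono hsub (Set.countable_range _)
  have hQc : (Q : Set ↥𝔡).Countable := by
    rw [hQ, AddSubgroup.coe_map]
    exact hLc.image _
  -- discreteness
  have key : (∀ U ∈ nhds (0 : ↥𝔡), ∃ y ∈ U ∩ (Q : Set ↥𝔡), y ≠ 0) → False := by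
    intro hacc
    have hperf : Perfect (Q : Set ↥𝔡) := by
      refine ⟨hQclosed, ?_⟩
      intro q hq
      rw [accPt_iff_nhds]
      intro U hU
      have hcont : Continuous (fun y : ↥𝔡 => y + q) := continuous_id.add continuous_const
      have hU' : (fun y : ↥𝔡 => y + q) ⁻¹' U ∈ nhds (0 : ↥𝔡) := by
        apply hcont.continuousAt.preimage_mem_nhds
        simpa using hU
      obtain ⟨y, ⟨hyU, hyQ⟩, hy0⟩ := hacc _ hU'
      exact ⟨y + q, ⟨hyU, Q.add_mem hyQ hq⟩, by simpa using hy0⟩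
    obtain ⟨f, hfQ, hfcont, hfinj⟩ := hperf.exists_nat_bool_injection ⟨0, Q.zero_mem⟩
    have hcnt : Countable (ℕ → Bool) := by
      have hc : (Set.range f).Countable := hQc.mono hfQ
      have := hc.to_subtype
      exact Countable.of_equiv _ (Equiv.ofInjective f hfinj).symm
    exact (not_countable_iff.mpr aux_uncountable_cantor) hcnt
  have hdisc : DiscreteTopology ↥Q := by
    rcases em (∃ U ∈ nhds (0 : ↥𝔡), ∀ y ∈ U ∩ (Q : Set ↥𝔡), y = 0) with ⟨U, hU, hU0⟩ | h
    · obtain ⟨V, hVU, hVopen, hV0⟩ := mem_nhds_iff.mp hU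
      rw [discreteTopology_iff_isOpen_singleton_zero]
      have heq : ({0} : Set ↥Q) = (Subtype.val : ↥Q → ↥𝔡) ⁻¹' V := by
        ext x
        simp only [Set.mem_singleton_iff, Set.mem_preimage]
        constructor
        · rintro rfl; exact hV0
        · intro hx
          exact Subtype.ext (hU0 (x : ↥𝔡) ⟨hVU hx, x.2⟩)
      rw [heq]
      exact hVopen.preimage continuous_subtype_val
    · push_neg at h
      exact (key h).elim
  refine ⟨hdisc, ?_⟩
  -- span
  rw [hQ]
  have hcoe : ((AddSubgroup.map π.toAddMonoidHom L : AddSubgroup ↥𝔡) : Set ↥𝔡)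
      = π '' (L : Set (Fin n → ℝ)) := by
    rw [AddSubgroup.coe_map]; rfl
  rw [hcoe, Submodule.span_image]
  have hspanL : Submodule.span ℝ (L : Set (Fin n → ℝ)) = ⊤ := by
    rw [eq_top_iff, ← b.span_eq]
    apply Submodule.span_mono
    rw [hL]
    exact AddSubgroup.subset_closure
  rw [hspanL, Submodule.map_top]
  exact Submodule.linearProjOfIsCompl_range hcompl
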